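/- arXiv:1601.06888 — 2 statements merged into one kernel-verified Lean document; each statement's English description precedes it below -/
import Mathlib

section
/- Define Γ(N) = max { tr(J_N R) : R Hermitian, ρ a density operator, −ρ ⊗ I ≤ R^{T_B} ≤ ρ ⊗ I } where J_N is the Choi matrix of channel N. Then for the noiseless qudit channel I_d (identity channel on C^d), Γ(I_d) = d. -/
open Matrix
open scoped Kronecker ComplexOrder

/-- Loewner order: `Loe M N` means `M ≤ N`. -/
def Loe {n : Type*} [Fintype n] (M N : Matrix n n ℂ) : Prop := (N - M).PosSemidef

/-- Partial transpose on the second tensor factor. -/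
def PTb {A B : Type*} (M : Matrix (A × B) (A × B) ℂ) : Matrix (A × B) (A × B) ℂ :=
  fun p q => M (p.1, q.2) (q.1, p.2)

/-- The set of values `tr(J R)` of the SDP `Γ`: `R` Hermitian, `ρ` a density
operator, `−ρ ⊗ I ≤ R^{T_B} ≤ ρ ⊗ I`. -/
def GammaSet {A B : Type*} [Fintype A] [Fintype B] [DecidableEq B]
    (J : Matrix (A × B) (A × B) ℂ) : Set ℝ :=
  {t : ℝ | ∃ (R : Matrix (A × B) (A × B) ℂ) (ρ : Matrix A A ℂ),
    R.IsHermitian ∧ ρ.PosSemidef ∧ ρ.trace = 1 ∧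
    Loe (-(ρ ⊗ₖ (1 : Matrix B B ℂ))) (PTb R) ∧
    Loe (PTb R) (ρ ⊗ₖ (1 : Matrix B B ℂ)) ∧
    (J * R).trace = (t : ℂ)}

/-- The unnormalized maximally entangled projector `Φ_d`, which is the Choi
matrix of the noiseless qudit channel `I_d`. -/
def Phi (d : ℕ) : Matrix (Fin d × Fin d) (Fin d × Fin d) ℂ :=
  fun p q => if p.1 = p.2 ∧ q.1 = q.2 then 1 else 0

/-! ### Auxiliary lemmas -/

/-- The swap matrix, which is the partial transpose of `Phi d`. -/
def Fm (d : ℕ) : Matrix (Fin d × Fin d) (Fin d × Fin d) ℂ :=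
  fun p q => if p.1 = q.2 ∧ q.1 = p.2 then 1 else 0

lemma PTb_Phi (d : ℕ) : PTb (Phi d) = Fm d := rfl

lemma trace_PTb_mul_PTb {A B : Type*} [Fintype A] [Fintype B]
    (M N : Matrix (A × B) (A × B) ℂ) :
    (PTb M * PTb N).trace = (M * N).trace := by
  simp only [Matrix.trace, Matrix.diag, Matrix.mul_apply, PTb]
  calc ∑ x : A × B, ∑ y : A × B, M (x.1, y.2) (y.1, x.2) * N (y.1, x.2) (x.1, y.2)
      = ∑ x : (A × B) × (A × B), M (x.1.1, x.2.2) (x.2.1, x.1.2) * N (x.2.1, x.1.2) (x.1.1, x.2.2) :=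
        (Fintype.sum_prod_type (fun x : (A × B) × (A × B) =>
          M (x.1.1, x.2.2) (x.2.1, x.1.2) * N (x.2.1, x.1.2) (x.1.1, x.2.2))).symm
    _ = ∑ x : (A × B) × (A × B), M x.1 x.2 * N x.2 x.1 :=
        Fintype.sum_equiv ⟨fun x => ((x.1.1, x.2.2), (x.2.1, x.1.2)),
          fun x => ((x.1.1, x.2.2), (x.2.1, x.1.2)), fun _ => rfl, fun _ => rfl⟩ _ _ (fun x => rfl)
    _ = ∑ x : A × B, ∑ y : A × B, M x y * N y x :=
        Fintype.sum_prod_type (fun x : (A × B) × (A × B) => M x.1 x.2 * N x.2 x.1)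

lemma trace_nonneg' {n : Type*} [Fintype n] [DecidableEq n] {M : Matrix n n ℂ}
    (hM : M.PosSemidef) : 0 ≤ M.trace := by
  apply Finset.sum_nonneg
  intro i _
  have h := hM.dotProduct_mulVec_nonneg (Pi.single i 1)
  simpa [dotProduct, Pi.single_apply, apply_ite] using h

lemma smul_posSemidef {n : Type*} [Fintype n] {c : ℝ} (hc : 0 ≤ c)
    {M : Matrix n n ℂ} (hM : M.PosSemidef) : ((c : ℂ) • M).PosSemidef := by
  apply Matrix.PosSemidef.of_dotProduct_mulVec_nonneg
  · unfold Matrix.IsHermitian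
    rw [conjTranspose_smul, hM.1.eq]
    simp
  · intro x
    have := hM.dotProduct_mulVec_nonneg x
    calc (0:ℂ) ≤ (c:ℂ) * (star x ⬝ᵥ M *ᵥ x) := by
          apply mul_nonneg _ this
          exact_mod_cast hc
      _ = star x ⬝ᵥ ((c:ℂ) • M) *ᵥ x := by
          rw [smul_mulVec, dotProduct_smul, smul_eq_mul]

open scoped MatrixOrder in
lemma trace_mul_nonneg {n : Type*} [Fintype n] [DecidableEq n]
    {M N : Matrix n n ℂ} (hM : M.PosSemidef) (hN : N.PosSemidef) :
    0 ≤ (M * N).trace := by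
  have hM0 : 0 ≤ M := hM.nonneg
  have h1 : M * N = CFC.sqrt M * (CFC.sqrt M * N) := by
    rw [← mul_assoc, CFC.sqrt_mul_sqrt_self M hM0]
  rw [h1, Matrix.trace_mul_comm]
  have h2 : (CFC.sqrt M * N * CFC.sqrt M).PosSemidef := by
    have := hN.conjTranspose_mul_mul_same (CFC.sqrt M)
    rwa [(CFC.sqrt_nonneg M).posSemidef.1.eq] at this
  exact trace_nonneg' h2

lemma Fm_herm (d : ℕ) : (Fm d).IsHermitian := by
  ext p q
  simp only [Fm, conjTranspose_apply]
  by_cases h : q.1 = p.2 <;> by_cases h' : p.1 = q.2 <;> simp [h, h', and_comm]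

lemma Fm_mul_Fm (d : ℕ) : Fm d * Fm d = 1 := by
  ext p q
  rw [Matrix.mul_apply, Fintype.sum_prod_type]
  simp only [Fm, Matrix.one_apply, ite_mul, one_mul, zero_mul, ite_and, Prod.ext_iff]
  rw [Finset.sum_eq_single p.2]
  · rw [Finset.sum_eq_single p.1] <;> aesop
  · aesop
  · aesop

lemma Phi_mul_Phi (d : ℕ) : Phi d * Phi d = (d : ℂ) • Phi d := by
  ext p q
  rw [Matrix.mul_apply, Fintype.sum_prod_type]
  simp only [Phi, Matrix.smul_apply, smul_eq_mul, ite_mul, one_mul, zero_mul, ite_and]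
  by_cases h : p.1 = p.2 <;> by_cases h' : q.1 = q.2 <;>
    simp [h, h', Finset.sum_ite_eq, Finset.sum_ite_eq']

lemma Phi_trace (d : ℕ) : (Phi d).trace = (d : ℂ) := by
  rw [Matrix.trace, Fintype.sum_prod_type]
  simp [Matrix.diag, Phi, Finset.sum_ite_eq]

lemma Phi_herm (d : ℕ) : (Phi d).IsHermitian := by
  ext p q
  simp only [Phi, conjTranspose_apply]
  by_cases h : q.1 = q.2 <;> by_cases h' : p.1 = p.2 <;> simp [h, h', and_comm]

lemma one_add_Fm_posSemidef (d : ℕ) : ((1 : Matrix (Fin d × Fin d) _ ℂ) + Fm d).PosSemidef := by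
  set P : Matrix (Fin d × Fin d) (Fin d × Fin d) ℂ := ((2:ℂ)⁻¹) • (1 + Fm d) with hPdef
  have hPH : Pᴴ = P := by
    rw [hPdef, conjTranspose_smul, conjTranspose_add, conjTranspose_one, (Fm_herm d).eq]
    norm_num
  have hPP : Pᴴ * P = P := by
    rw [hPH, hPdef, smul_mul_smul_comm]
    have e : ((1 : Matrix (Fin d × Fin d) _ ℂ) + Fm d) * (1 + Fm d)
        = 1 + Fm d + Fm d + Fm d * Fm d := by noncomm_ring
    rw [e, Fm_mul_Fm, show (1 : Matrix (Fin d × Fin d) _ ℂ) + Fm d + Fm d + 1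
        = (2:ℂ) • (1 + Fm d) by rw [two_smul]; abel, smul_smul,
      show ((2:ℂ)⁻¹ * 2⁻¹ * 2) = (2:ℂ)⁻¹ by norm_num]
  have hP : P.PosSemidef := hPP ▸ Matrix.posSemidef_conjTranspose_mul_self P
  have := smul_posSemidef (c := 2) (by norm_num) hP
  rwa [hPdef, smul_smul, show ((2:ℝ):ℂ) * (2:ℂ)⁻¹ = 1 by norm_num, one_smul] at this

lemma one_sub_Fm_posSemidef (d : ℕ) : ((1 : Matrix (Fin d × Fin d) _ ℂ) - Fm d).PosSemidef := by
  set P : Matrix (Fin d × Fin d) (Fin d × Fin d) ℂ := ((2:ℂ)⁻¹) • (1 - Fm d) with hPdef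
  have hPH : Pᴴ = P := by
    rw [hPdef, conjTranspose_smul, conjTranspose_sub, conjTranspose_one, (Fm_herm d).eq]
    norm_num
  have hPP : Pᴴ * P = P := by
    rw [hPH, hPdef, smul_mul_smul_comm]
    have e : ((1 : Matrix (Fin d × Fin d) _ ℂ) - Fm d) * (1 - Fm d)
        = 1 - Fm d - Fm d + Fm d * Fm d := by noncomm_ring
    rw [e, Fm_mul_Fm, show (1 : Matrix (Fin d × Fin d) _ ℂ) - Fm d - Fm d + 1
        = (2:ℂ) • (1 - Fm d) by rw [two_smul]; abel, smul_smul,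
      show ((2:ℂ)⁻¹ * 2⁻¹ * 2) = (2:ℂ)⁻¹ by norm_num]
  have hP : P.PosSemidef := hPP ▸ Matrix.posSemidef_conjTranspose_mul_self P
  have := smul_posSemidef (c := 2) (by norm_num) hP
  rwa [hPdef, smul_smul, show ((2:ℝ):ℂ) * (2:ℂ)⁻¹ = 1 by norm_num, one_smul] at this

/-- `Γ(I_d) = d` for the noiseless qudit channel `I_d`. -/
theorem gamma_identity_channel (d : ℕ) (hd : 0 < d) :
    IsGreatest (GammaSet (Phi d)) (d : ℝ) := by
  have hdC : (d : ℂ) ≠ 0 := Nat.cast_ne_zero.mpr hd.ne'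
  constructor
  · -- membership: take R = d⁻¹ • Φ, ρ = d⁻¹ • 1
    refine ⟨(((d:ℝ)⁻¹ : ℝ) : ℂ) • Phi d, (((d:ℝ)⁻¹ : ℝ) : ℂ) • 1, ?_, ?_, ?_, ?_, ?_, ?_⟩
    · unfold Matrix.IsHermitian
      rw [conjTranspose_smul, (Phi_herm d).eq]
      simp
    · exact smul_posSemidef (by positivity) Matrix.PosSemidef.one
    · rw [Matrix.trace_smul, Matrix.trace_one, smul_eq_mul]
      push_cast
      field_simp
      simp
    · -- -(ρ ⊗ 1) ≤ PTb R
      have hPT : PTb ((((d:ℝ)⁻¹ : ℝ) : ℂ) • Phi d) = (((d:ℝ)⁻¹ : ℝ) : ℂ) • Fm d := rfl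
      unfold Loe
      rw [hPT, Matrix.smul_kronecker, Matrix.one_kronecker_one, sub_neg_eq_add, ← smul_add]
      exact smul_posSemidef (by positivity) ((add_comm (1 : Matrix _ _ ℂ) (Fm d)) ▸
        one_add_Fm_posSemidef d)
    · have hPT : PTb ((((d:ℝ)⁻¹ : ℝ) : ℂ) • Phi d) = (((d:ℝ)⁻¹ : ℝ) : ℂ) • Fm d := rfl
      unfold Loe
      rw [hPT, Matrix.smul_kronecker, Matrix.one_kronecker_one, ← smul_sub]
      exact smul_posSemidef (by positivity) (one_sub_Fm_posSemidef d)
    · rw [Matrix.mul_smul, Matrix.trace_smul, Phi_mul_Phi, Matrix.trace_smul, Phi_trace]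
      push_cast
      simp only [smul_eq_mul]
      field_simp
  · -- upper bound
    rintro t ⟨R, ρ, hR, hρ, hρtr, h1, h2, htr⟩
    set X := PTb R with hX
    set σ := ρ ⊗ₖ (1 : Matrix (Fin d) (Fin d) ℂ) with hσ
    have key1 : 0 ≤ (((1 : Matrix (Fin d × Fin d) _ ℂ) + Fm d) * (X + σ)).trace := by
      apply trace_mul_nonneg (one_add_Fm_posSemidef d)
      have := h1
      unfold Loe at this
      rwa [sub_neg_eq_add] at this
    have key2 : 0 ≤ (((1 : Matrix (Fin d × Fin d) _ ℂ) - Fm d) * (σ - X)).trace := by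
      exact trace_mul_nonneg (one_sub_Fm_posSemidef d) h2
    have hsum : ((1 + Fm d) * (X + σ)).trace + ((1 - Fm d) * (σ - X)).trace
        = 2 * (σ.trace + (Fm d * X).trace) := by
      have expand : (1 + Fm d) * (X + σ) + (1 - Fm d) * (σ - X)
          = (2:ℂ) • σ + (2:ℂ) • (Fm d * X) := by
        have h2s : (2:ℂ) • σ = σ + σ := two_smul ℂ σ
        have h2s' : (2:ℂ) • (Fm d * X) = Fm d * X + Fm d * X := two_smul ℂ _
        rw [h2s, h2s']
        noncomm_ring
      rw [← Matrix.trace_add, expand, Matrix.trace_add, Matrix.trace_smul, Matrix.trace_smul]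
      simp [smul_eq_mul]
      ring
    have hσtr : σ.trace = (d : ℂ) := by
      rw [hσ, Matrix.trace_kronecker, hρtr, Matrix.trace_one, one_mul]
      simp
    have hFX : (Fm d * X).trace = (t : ℂ) := by
      rw [hX, ← PTb_Phi, trace_PTb_mul_PTb, htr]
    have hge : (0:ℂ) ≤ 2 * ((d : ℂ) + (t : ℂ)) := by
      rw [← hσtr, ← hFX, ← hsum]
      exact add_nonneg key1 key2
    have key3 : 0 ≤ (((1 : Matrix (Fin d × Fin d) _ ℂ) + Fm d) * (σ - X)).trace :=
      trace_mul_nonneg (one_add_Fm_posSemidef d) h2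
    have key4 : 0 ≤ (((1 : Matrix (Fin d × Fin d) _ ℂ) - Fm d) * (X + σ)).trace := by
      apply trace_mul_nonneg (one_sub_Fm_posSemidef d)
      have := h1
      unfold Loe at this
      rwa [sub_neg_eq_add] at this
    have hsum2 : ((1 + Fm d) * (σ - X)).trace + ((1 - Fm d) * (X + σ)).trace
        = 2 * (σ.trace - (Fm d * X).trace) := by
      have expand : (1 + Fm d) * (σ - X) + (1 - Fm d) * (X + σ)
          = (2:ℂ) • σ - (2:ℂ) • (Fm d * X) := by
        have h2s : (2:ℂ) • σ = σ + σ := two_smul ℂ σ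
        have h2s' : (2:ℂ) • (Fm d * X) = Fm d * X + Fm d * X := two_smul ℂ _
        rw [h2s, h2s']
        noncomm_ring
      rw [← Matrix.trace_add, expand, Matrix.trace_sub, Matrix.trace_smul, Matrix.trace_smul]
      simp [smul_eq_mul]
      ring
    have hle : (0:ℂ) ≤ 2 * ((d : ℂ) - (t : ℂ)) := by
      rw [← hσtr, ← hFX, ← hsum2]
      exact add_nonneg key3 key4
    rcases Complex.le_def.mp hle with ⟨hre, _⟩
    simp only [Complex.zero_re, Complex.mul_re, Complex.sub_re, Complex.sub_im,
      Complex.ofReal_re, Complex.ofReal_im, Complex.natCast_re, Complex.natCast_im] at hre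
    norm_num at hre
    linarith
end

section
/- Super-multiplicativity of the optimal PPT fidelity: for channels N1, N2 and positive reals k1, k2, F^{PPTp}(N1, k1) · F^{PPTp}(N2, k2) ≤ F^{PPTp}(N1 ⊗ N2, k1 k2), where F^{PPTp}(N, k) = max tr(J_N W) subject to 0 ≤ W ≤ ρ ⊗ I, tr ρ = 1, ρ ≥ 0, and −(ρ ⊗ I)/k ≤ W^{T_B} ≤ (ρ ⊗ I)/k. -/
open Matrix
open scoped Kronecker ComplexOrder

/-- Partial trace over the second tensor factor. -/
noncomputable def trB {A B : Type*} [Fintype B]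
    (M : Matrix (A × B) (A × B) ℂ) : Matrix A A ℂ :=
  fun i j => ∑ b, M (i, b) (j, b)

/-- Values of the PPT-preserving fidelity SDP `F^{PPTp}(N, k)`:
`tr(J W)` with `0 ≤ W ≤ ρ ⊗ I`, `tr ρ = 1`, `ρ ≥ 0`,
`−(ρ ⊗ I)/k ≤ W^{T_B} ≤ (ρ ⊗ I)/k`. -/
def FSet {A B : Type*} [Fintype A] [Fintype B] [DecidableEq B]
    (J : Matrix (A × B) (A × B) ℂ) (k : ℝ) : Set ℝ :=
  {t : ℝ | ∃ (W : Matrix (A × B) (A × B) ℂ) (ρ : Matrix A A ℂ),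
    ρ.PosSemidef ∧ ρ.trace = 1 ∧ W.PosSemidef ∧
    Loe W (ρ ⊗ₖ (1 : Matrix B B ℂ)) ∧
    Loe (-(((k : ℂ))⁻¹ • (ρ ⊗ₖ (1 : Matrix B B ℂ)))) (PTb W) ∧
    Loe (PTb W) (((k : ℂ))⁻¹ • (ρ ⊗ₖ (1 : Matrix B B ℂ))) ∧
    (J * W).trace = (t : ℂ)}

/-- The Choi matrix of a tensor product channel, with factors reordered. -/
def choiTensor {A1 B1 A2 B2 : Type*}
    (J1 : Matrix (A1 × B1) (A1 × B1) ℂ) (J2 : Matrix (A2 × B2) (A2 × B2) ℂ) :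
    Matrix ((A1 × A2) × (B1 × B2)) ((A1 × A2) × (B1 × B2)) ℂ :=
  fun p q => J1 (p.1.1, p.2.1) (q.1.1, q.2.1) * J2 (p.1.2, p.2.2) (q.1.2, q.2.2)

section Aux

variable {m n : Type*} [Fintype m] [Fintype n] [DecidableEq m] [DecidableEq n]

lemma kron_conjTranspose (A : Matrix m m ℂ) (B : Matrix n n ℂ) :
    (A ⊗ₖ B)ᴴ = Aᴴ ⊗ₖ Bᴴ := by
  ext p q
  simp [Matrix.kroneckerMap_apply, Matrix.conjTranspose_apply, star_mul', mul_comm]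

lemma kron_psd {A : Matrix m m ℂ} {B : Matrix n n ℂ}
    (hA : A.PosSemidef) (hB : B.PosSemidef) : (A ⊗ₖ B).PosSemidef := by
  exact hA.kronecker hB

lemma trace_submatrix_equiv (M : Matrix m m ℂ) (e : n ≃ m) :
    (M.submatrix e e).trace = M.trace := by
  simp only [Matrix.trace, Matrix.diag, Matrix.submatrix_apply]
  exact e.sum_comp fun i => M i i

end Aux

section Reorder

variable {A1 B1 A2 B2 : Type*} [Fintype A1] [Fintype B1] [Fintype A2] [Fintype B2]
  [DecidableEq A1] [DecidableEq B1] [DecidableEq A2] [DecidableEq B2]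

/-- The reordering equivalence. -/
def reord : ((A1 × A2) × (B1 × B2)) ≃ ((A1 × B1) × (A2 × B2)) where
  toFun p := ((p.1.1, p.2.1), (p.1.2, p.2.2))
  invFun p := ((p.1.1, p.2.1), (p.1.2, p.2.2))
  left_inv p := rfl
  right_inv p := rfl

lemma choiTensor_eq (M : Matrix (A1 × B1) (A1 × B1) ℂ) (N : Matrix (A2 × B2) (A2 × B2) ℂ) :
    choiTensor M N = (M ⊗ₖ N).submatrix (reord) (reord) := rfl

lemma choiTensor_psd {M : Matrix (A1 × B1) (A1 × B1) ℂ} {N : Matrix (A2 × B2) (A2 × B2) ℂ}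
    (hM : M.PosSemidef) (hN : N.PosSemidef) : (choiTensor M N).PosSemidef := by
  rw [choiTensor_eq]
  exact (kron_psd hM hN).submatrix _

lemma choiTensor_sub_left (M M' : Matrix (A1 × B1) (A1 × B1) ℂ)
    (N : Matrix (A2 × B2) (A2 × B2) ℂ) :
    choiTensor (M - M') N = choiTensor M N - choiTensor M' N := by
  ext p q; simp [choiTensor, sub_mul]

lemma choiTensor_trace_mul (J1 M : Matrix (A1 × B1) (A1 × B1) ℂ)
    (J2 N : Matrix (A2 × B2) (A2 × B2) ℂ) :
    (choiTensor J1 J2 * choiTensor M N).trace = (J1 * M).trace * (J2 * N).trace := by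
  rw [choiTensor_eq, choiTensor_eq, Matrix.submatrix_mul_equiv, trace_submatrix_equiv,
    ← Matrix.mul_kronecker_mul, Matrix.trace_kronecker]

lemma PTb_choiTensor (M : Matrix (A1 × B1) (A1 × B1) ℂ) (N : Matrix (A2 × B2) (A2 × B2) ℂ) :
    PTb (choiTensor M N) = choiTensor (PTb M) (PTb N) := rfl

lemma choiTensor_sub (M M' : Matrix (A1 × B1) (A1 × B1) ℂ)
    (N N' : Matrix (A2 × B2) (A2 × B2) ℂ) :
    choiTensor M N - choiTensor M' N' = ((M ⊗ₖ N) - (M' ⊗ₖ N')).submatrix reord reord := rfl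

lemma choiTensor_rho_one (ρ1 : Matrix A1 A1 ℂ) (ρ2 : Matrix A2 A2 ℂ)
    [DecidableEq B1] [DecidableEq B2] :
    ((ρ1 ⊗ₖ ρ2) ⊗ₖ (1 : Matrix (B1 × B2) (B1 × B2) ℂ))
      = choiTensor (ρ1 ⊗ₖ (1 : Matrix B1 B1 ℂ)) (ρ2 ⊗ₖ (1 : Matrix B2 B2 ℂ)) := by
  ext p q
  simp only [choiTensor, Matrix.kroneckerMap_apply, Matrix.one_apply, Prod.ext_iff]
  by_cases h1 : p.2.1 = q.2.1 <;> by_cases h2 : p.2.2 = q.2.2 <;>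
    simp [h1, h2] <;> ring

end Reorder

section Order

variable {m n : Type*} [Fintype m] [Fintype n] [DecidableEq m] [DecidableEq n]

lemma loe_iff {M N : Matrix m m ℂ} : Loe M N ↔ (N - M).PosSemidef := Iff.rfl

lemma psd_smul {M : Matrix m m ℂ} (hM : M.PosSemidef) {c : ℝ} (hc : 0 ≤ c) :
    ((c : ℂ) • M).PosSemidef := by
  constructor
  · show _ = _
    rw [Matrix.conjTranspose_smul, hM.1.eq]
    norm_num
  · intro x
    exact (hM.smul (a := (c : ℂ)) (by exact_mod_cast hc)).2 x

/-- `0 ≤ W1 ≤ P1`, `0 ≤ W2 ≤ P2` implies `W1 ⊗ W2 ≤ P1 ⊗ P2`. -/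
lemma kron_loe {W1 P1 : Matrix m m ℂ} {W2 P2 : Matrix n n ℂ}
    (h1 : W1.PosSemidef) (h1' : (P1 - W1).PosSemidef)
    (h2 : W2.PosSemidef) (h2' : (P2 - W2).PosSemidef) :
    (P1 ⊗ₖ P2 - W1 ⊗ₖ W2).PosSemidef := by
  have hP2 : P2.PosSemidef := by simpa using (h2'.add h2)
  have key : P1 ⊗ₖ P2 - W1 ⊗ₖ W2 = (P1 - W1) ⊗ₖ P2 + W1 ⊗ₖ (P2 - W2) := by
    ext p q
    simp [Matrix.kroneckerMap_apply]; ring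
  rw [key]
  exact (kron_psd h1' hP2).add (kron_psd h1 h2')

/-- `-Q1 ≤ T1 ≤ Q1`, `-Q2 ≤ T2 ≤ Q2` implies `T1 ⊗ T2 ≤ Q1 ⊗ Q2`. -/
lemma kron_ppt_upper {T1 Q1 : Matrix m m ℂ} {T2 Q2 : Matrix n n ℂ}
    (h1l : (T1 + Q1).PosSemidef) (h1u : (Q1 - T1).PosSemidef)
    (h2l : (T2 + Q2).PosSemidef) (h2u : (Q2 - T2).PosSemidef) :
    (Q1 ⊗ₖ Q2 - T1 ⊗ₖ T2).PosSemidef := by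
  have key : Q1 ⊗ₖ Q2 - T1 ⊗ₖ T2 =
      ((2⁻¹ : ℝ) : ℂ) • ((Q1 - T1) ⊗ₖ (Q2 + T2) + (Q1 + T1) ⊗ₖ (Q2 - T2)) := by
    ext p q
    simp only [Matrix.smul_apply, Matrix.add_apply, Matrix.sub_apply,
      Matrix.kroneckerMap_apply, smul_eq_mul]
    push_cast
    ring
  rw [key]
  exact psd_smul ((kron_psd h1u (by simpa [add_comm] using h2l)).add
    (kron_psd (by simpa [add_comm] using h1l) h2u)) (by norm_num)

/-- `-Q1 ≤ T1 ≤ Q1`, `-Q2 ≤ T2 ≤ Q2` implies `-Q1 ⊗ Q2 ≤ T1 ⊗ T2`. -/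
lemma kron_ppt_lower {T1 Q1 : Matrix m m ℂ} {T2 Q2 : Matrix n n ℂ}
    (h1l : (T1 + Q1).PosSemidef) (h1u : (Q1 - T1).PosSemidef)
    (h2l : (T2 + Q2).PosSemidef) (h2u : (Q2 - T2).PosSemidef) :
    (T1 ⊗ₖ T2 + Q1 ⊗ₖ Q2).PosSemidef := by
  have key : T1 ⊗ₖ T2 + Q1 ⊗ₖ Q2 =
      ((2⁻¹ : ℝ) : ℂ) • ((Q1 - T1) ⊗ₖ (Q2 - T2) + (Q1 + T1) ⊗ₖ (Q2 + T2)) := by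
    ext p q
    simp only [Matrix.smul_apply, Matrix.add_apply, Matrix.sub_apply,
      Matrix.kroneckerMap_apply, smul_eq_mul]
    push_cast
    ring
  rw [key]
  exact psd_smul ((kron_psd h1u h2u).add
    (kron_psd (by simpa [add_comm] using h1l) (by simpa [add_comm] using h2l))) (by norm_num)

end Order

/-- Super-multiplicativity of the optimal PPT fidelity:
`F^{PPTp}(N1, k1) · F^{PPTp}(N2, k2) ≤ F^{PPTp}(N1 ⊗ N2, k1 k2)`. -/
theorem ppt_fidelity_supermultiplicative
    {A1 B1 A2 B2 : Type*} [Fintype A1] [Fintype B1] [Fintype A2] [Fintype B2]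
    [DecidableEq A1] [DecidableEq B1] [DecidableEq A2] [DecidableEq B2]
    (J1 : Matrix (A1 × B1) (A1 × B1) ℂ) (J2 : Matrix (A2 × B2) (A2 × B2) ℂ)
    (hJ1 : J1.PosSemidef) (hJ1TP : trB J1 = 1)
    (hJ2 : J2.PosSemidef) (hJ2TP : trB J2 = 1)
    (k1 k2 : ℝ) (hk1 : 0 < k1) (hk2 : 0 < k2)
    (f1 f2 f12 : ℝ)
    (hf1 : IsGreatest (FSet J1 k1) f1) (hf2 : IsGreatest (FSet J2 k2) f2)
    (hf12 : IsGreatest (FSet (choiTensor J1 J2) (k1 * k2)) f12) :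
    f1 * f2 ≤ f12 := by
  obtain ⟨W1, ρ1, hρ1, hρ1t, hW1, hW1le, hT1l, hT1u, hW1tr⟩ := hf1.1
  obtain ⟨W2, ρ2, hρ2, hρ2t, hW2, hW2le, hT2l, hT2u, hW2tr⟩ := hf2.1
  apply hf12.2
  refine ⟨choiTensor W1 W2, ρ1 ⊗ₖ ρ2, kron_psd hρ1 hρ2, ?_, choiTensor_psd hW1 hW2,
    ?_, ?_, ?_, ?_⟩
  · rw [Matrix.trace_kronecker, hρ1t, hρ2t, one_mul]
  all_goals
    have hQ1l : (PTb W1 + ((k1 : ℂ))⁻¹ • (ρ1 ⊗ₖ (1 : Matrix B1 B1 ℂ))).PosSemidef := by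
      have := hT1l; rw [loe_iff, sub_neg_eq_add] at this; exact this
    have hQ2l : (PTb W2 + ((k2 : ℂ))⁻¹ • (ρ2 ⊗ₖ (1 : Matrix B2 B2 ℂ))).PosSemidef := by
      have := hT2l; rw [loe_iff, sub_neg_eq_add] at this; exact this
    have hbig : ((((k1 * k2 : ℝ)) : ℂ))⁻¹ •
        ((ρ1 ⊗ₖ ρ2) ⊗ₖ (1 : Matrix (B1 × B2) (B1 × B2) ℂ)) =
        ((((k1 : ℂ))⁻¹ • (ρ1 ⊗ₖ (1 : Matrix B1 B1 ℂ))) ⊗ₖ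
          (((k2 : ℂ))⁻¹ • (ρ2 ⊗ₖ (1 : Matrix B2 B2 ℂ)))).submatrix reord reord := by
      rw [choiTensor_rho_one, choiTensor_eq]
      have h2 : (((k1 : ℂ))⁻¹ • (ρ1 ⊗ₖ (1 : Matrix B1 B1 ℂ))) ⊗ₖ
          (((k2 : ℂ))⁻¹ • (ρ2 ⊗ₖ (1 : Matrix B2 B2 ℂ))) =
          ((((k1 * k2 : ℝ)) : ℂ))⁻¹ •
            ((ρ1 ⊗ₖ (1 : Matrix B1 B1 ℂ)) ⊗ₖ (ρ2 ⊗ₖ (1 : Matrix B2 B2 ℂ))) := by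
        rw [Matrix.smul_kronecker, Matrix.kronecker_smul, smul_smul]
        congr 1
        push_cast
        rw [mul_inv]
      rw [h2]
      rfl
  · -- W ≤ ρ ⊗ 1
    rw [loe_iff, choiTensor_rho_one, choiTensor_sub]
    exact (kron_loe hW1 hW1le hW2 hW2le).submatrix _
  · -- lower PPT bound
    rw [loe_iff, sub_neg_eq_add, PTb_choiTensor, choiTensor_eq, hbig]
    exact (kron_ppt_lower hQ1l hT1u hQ2l hT2u).submatrix _
  · -- upper PPT bound
    rw [loe_iff, PTb_choiTensor, choiTensor_eq, hbig]
    exact (kron_ppt_upper hQ1l hT1u hQ2l hT2u).submatrix _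
  · rw [choiTensor_trace_mul, hW1tr, hW2tr]; push_cast; ring
end
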